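/- Let F_q be a finite field with q ≡ 1 (mod 3), ψ a nontrivial additive character, χ a multiplicative character of order 3 with conjugate χ̄, and let a₁,a₂,a₃ ∈ F_q*. Then the number M of solutions (x₁,x₂,x₃) ∈ F_q³ of a₁x₁³ + a₂x₂³ + a₃x₃³ = 0 equals q² + ((q−1)/q)·(χ̄(a₁a₂a₃)·G(χ,ψ)³ + χ(a₁a₂a₃)·G(χ̄,ψ)³). -/

import Mathlib

open Finset

private lemma cube_count {F : Type*} [Field F] [Fintype F] [DecidableEq F]
    (hq : Fintype.card F % 3 = 1)
    (χ : MulChar F ℂ) (hχ : orderOf χ = 3) (u : F) :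
    (((univ.filter (fun x : F => x ^ 3 = u)).card : ℂ)) = 1 + χ u + (χ ^ 2) u := by
  have hq1 : 1 ≤ Fintype.card F := Fintype.card_pos
  have h3 : 3 ∣ Fintype.card F - 1 := by omega
  have hχ3 : χ ^ 3 = 1 := hχ ▸ pow_orderOf_eq_one χ
  have hval : ∀ v : F, v ≠ 0 → χ v ^ 3 = 1 := by
    intro v hv
    rw [← MulChar.pow_apply' χ (n := 3) (by norm_num) v, hχ3]
    have := MulChar.one_apply_coe (R := F) (R' := ℂ) (isUnit_iff_ne_zero.mpr hv).unit
    rwa [IsUnit.unit_spec] at this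
  -- kernel of χ is exactly the cubes
  have hker : ∀ u : F, u ≠ 0 → χ u = 1 → ∃ v : F, v ^ 3 = u := by
    obtain ⟨g, hg⟩ := IsCyclic.exists_generator (α := Fˣ)
    have hgen : ∀ w : Fˣ, ∃ k : ℕ, g ^ k = w := fun w =>
      (Submonoid.mem_powers_iff _ _).mp (mem_powers_iff_mem_zpowers.mpr (hg w))
    set ζ := χ (g : F) with hζdef
    have hζ3 : ζ ^ 3 = 1 := hval _ (Units.ne_zero g)
    have hχapp : ∀ k : ℕ, χ (((g ^ k : Fˣ) : F)) = ζ ^ k := by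
      intro k
      rw [Units.val_pow_eq_pow_val, map_pow]
    have hζne : ζ ≠ 1 := by
      intro h
      have h1 : χ = 1 := MulChar.eq_one_iff.mpr fun w => by
        obtain ⟨k, rfl⟩ := hgen w
        rw [hχapp, h, one_pow]
      rw [h1, orderOf_one] at hχ
      omega
    have hordζ : orderOf ζ = 3 := by
      have hdvd : orderOf ζ ∣ 3 := orderOf_dvd_iff_pow_eq_one.mpr hζ3
      rcases Nat.prime_three.eq_one_or_self_of_dvd _ hdvd with h | h
      · exact absurd (orderOf_eq_one_iff.mp h) hζne
      · exact h
    intro u hu h1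
    obtain ⟨k, hk⟩ := hgen (Units.mk0 u hu)
    have hu' : ((g ^ k : Fˣ) : F) = u := by rw [hk]; rfl
    have hz : ζ ^ k = 1 := by rw [← hχapp, hu', h1]
    have h3k : 3 ∣ k := hordζ ▸ orderOf_dvd_iff_pow_eq_one.mpr hz
    obtain ⟨m, rfl⟩ := h3k
    exact ⟨((g ^ m : Fˣ) : F), by
      rw [← Units.val_pow_eq_pow_val, ← pow_mul, mul_comm m 3, hu']⟩
  rcases eq_or_ne u 0 with rfl | hu
  · have he : univ.filter (fun x : F => x ^ 3 = (0 : F)) = {0} := by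
      ext x
      simp [pow_eq_zero_iff]
    rw [he]
    simp [MulChar.map_zero]
  · -- primitive cube root of unity in F
    haveI : Fact (Nat.Prime 3) := ⟨by norm_num⟩
    obtain ⟨g₃, hg₃⟩ := exists_prime_orderOf_dvd_card (G := Fˣ) 3
      (by rw [Fintype.card_units]; exact h3)
    have hω : IsPrimitiveRoot ((g₃ : F)) 3 :=
      IsPrimitiveRoot.coe_units_iff.mpr (hg₃ ▸ IsPrimitiveRoot.orderOf g₃)
    by_cases hcube : ∃ v : F, v ^ 3 = u
    · obtain ⟨v, rfl⟩ := hcube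
      have hv : v ≠ 0 := fun h => hu (by rw [h]; ring)
      have h1 : χ (v ^ 3) = 1 := by rw [map_pow]; exact hval v hv
      have h2 : (χ ^ 2) (v ^ 3) = 1 := by
        rw [MulChar.pow_apply' χ (n := 2) (by norm_num), h1, one_pow]
      have hcard : (univ.filter (fun x : F => x ^ 3 = v ^ 3)).card = 3 := by
        have heq : (univ.filter (fun x : F => x ^ 3 = v ^ 3)).card
            = (Polynomial.nthRootsFinset 3 (1 : F)).card := by
          apply Finset.card_bij' (fun x _ => x / v) (fun y _ => y * v)
          · intro x hx
            have hx3 := (Finset.mem_filter.mp hx).2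
            rw [Polynomial.mem_nthRootsFinset (by norm_num) (1 : F)]
            field_simp [hx3]
            exact hx3
          · intro y hy
            have hy3 := (Polynomial.mem_nthRootsFinset (by norm_num) (1 : F)).mp hy
            simp only [Finset.mem_filter, Finset.mem_univ, true_and]
            rw [mul_pow, hy3, one_mul]
          · intro x hx; field_simp
          · intro y hy; field_simp
        rw [heq, hω.card_nthRootsFinset]
      rw [hcard, h1, h2]
      norm_num
    · have hcard : univ.filter (fun x : F => x ^ 3 = u) = ∅ := by
        rw [Finset.filter_eq_empty_iff]
        exact fun {x} _ hx => hcube ⟨x, hx⟩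
      have hne1 : χ u ≠ 1 := fun h => hcube (hker u hu h)
      have hcube1 : χ u ^ 3 = 1 := hval u hu
      have hzero : 1 + χ u + (χ ^ 2) u = 0 := by
        rw [MulChar.pow_apply' χ (n := 2) (by norm_num)]
        have factored : (χ u - 1) * (1 + χ u + χ u ^ 2) = 0 := by
          linear_combination hcube1
        rcases mul_eq_zero.mp factored with h | h
        · exact absurd (by linear_combination h) hne1
        · exact h
      rw [hcard]
      simp only [Finset.card_empty, Nat.cast_zero]
      linear_combination -hzero

private lemma S_eq {F : Type*} [Field F] [Fintype F] [DecidableEq F]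
    (hq : Fintype.card F % 3 = 1)
    (ψ : AddChar F ℂ) (hψ : ∃ a : F, ψ a ≠ 1)
    (χ : MulChar F ℂ) (hχ : orderOf χ = 3) {c : F} (hc : c ≠ 0) :
    ∑ x : F, ψ (c * x ^ 3) =
      (χ ^ 2) c * gaussSum χ ψ + χ c * gaussSum (χ ^ 2) ψ := by
  have hprim : ψ.IsPrimitive :=
    AddChar.IsPrimitive.of_ne_one (by rintro rfl; obtain ⟨a, ha⟩ := hψ; exact ha (AddChar.one_apply a))
  have hχ3 : χ ^ 3 = 1 := hχ ▸ pow_orderOf_eq_one χ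
  have hval : χ c ^ 3 = 1 := by
    rw [← MulChar.pow_apply' χ (n := 3) (by norm_num) c, hχ3]
    have := MulChar.one_apply_coe (R := F) (R' := ℂ) (isUnit_iff_ne_zero.mpr hc).unit
    rwa [IsUnit.unit_spec] at this
  -- fiberwise decomposition
  have step1 : ∑ x : F, ψ (c * x ^ 3) =
      ∑ u : F, (((univ.filter (fun x : F => x ^ 3 = u)).card : ℂ)) * ψ (c * u) := by
    rw [← Finset.sum_fiberwise_of_maps_to (g := fun x : F => x ^ 3)
      (fun x _ => Finset.mem_univ (x ^ 3)) (fun x => ψ (c * x ^ 3))]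
    refine Finset.sum_congr rfl fun u _ => ?_
    rw [Finset.sum_congr rfl (fun x hx => by
      rw [(Finset.mem_filter.mp hx).2] : ∀ x ∈ univ.filter (fun x : F => x ^ 3 = u),
        ψ (c * x ^ 3) = ψ (c * u)), Finset.sum_const, nsmul_eq_mul]
  rw [step1]
  have step2 : ∀ u : F, (((univ.filter (fun x : F => x ^ 3 = u)).card : ℂ)) * ψ (c * u)
      = ψ (c * u) + χ u * ψ (c * u) + (χ ^ 2) u * ψ (c * u) := by
    intro u
    rw [cube_count hq χ hχ u]
    ring
  rw [Finset.sum_congr rfl fun u _ => step2 u, Finset.sum_add_distrib,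
    Finset.sum_add_distrib]
  -- first sum is zero
  have h0 : ∑ u : F, ψ (c * u) = 0 := by
    have := AddChar.sum_mulShift (ψ := ψ) c hprim
    rw [if_neg hc, Nat.cast_zero] at this
    rw [← this]
    exact Finset.sum_congr rfl fun u _ => by rw [mul_comm]
  -- Gauss sum identities
  have hcu : ((isUnit_iff_ne_zero.mpr hc).unit : F) = c := IsUnit.unit_spec _
  have hg1 : ∑ u : F, χ u * ψ (c * u) = gaussSum χ (ψ.mulShift c) := by
    simp only [gaussSum, AddChar.mulShift_apply]
  have hg2 : ∑ u : F, (χ ^ 2) u * ψ (c * u) = gaussSum (χ ^ 2) (ψ.mulShift c) := by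
    simp only [gaussSum, AddChar.mulShift_apply]
  have key1 : χ c * gaussSum χ (ψ.mulShift c) = gaussSum χ ψ := by
    have := gaussSum_mulShift χ ψ (isUnit_iff_ne_zero.mpr hc).unit
    rwa [hcu] at this
  have key2 : (χ ^ 2) c * gaussSum (χ ^ 2) (ψ.mulShift c) = gaussSum (χ ^ 2) ψ := by
    have := gaussSum_mulShift (χ ^ 2) ψ (isUnit_iff_ne_zero.mpr hc).unit
    rwa [hcu] at this
  rw [h0, hg1, hg2, zero_add]
  rw [MulChar.pow_apply' χ (n := 2) (by norm_num)] at key2 ⊢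
  linear_combination χ c ^ 2 * key1 + χ c * key2 -
    (gaussSum χ (ψ.mulShift c) + gaussSum (χ ^ 2) (ψ.mulShift c)) * hval

/-- For a finite field `F` with `q ≡ 1 (mod 3)`, the number of solutions of
`a₁x₁³ + a₂x₂³ + a₃x₃³ = 0` equals
`q² + ((q-1)/q)·(χ̄(a₁a₂a₃)·G(χ,ψ)³ + χ(a₁a₂a₃)·G(χ̄,ψ)³)`. -/
theorem count_diag_cubic_eq_gauss (F : Type*) [Field F] [Fintype F] [DecidableEq F]
    (hq : Fintype.card F % 3 = 1)
    (ψ : AddChar F ℂ) (hψ : ∃ a : F, ψ a ≠ 1)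
    (χ : MulChar F ℂ) (hχ : orderOf χ = 3)
    (a₁ a₂ a₃ : F) (ha₁ : a₁ ≠ 0) (ha₂ : a₂ ≠ 0) (ha₃ : a₃ ≠ 0) :
    (Fintype.card {x : F × F × F //
        a₁ * x.1 ^ 3 + a₂ * x.2.1 ^ 3 + a₃ * x.2.2 ^ 3 = 0} : ℂ) =
      (Fintype.card F : ℂ) ^ 2 +
        ((Fintype.card F : ℂ) - 1) / (Fintype.card F : ℂ) *
          ((χ ^ 2) (a₁ * a₂ * a₃) * gaussSum χ ψ ^ 3 +
            χ (a₁ * a₂ * a₃) * gaussSum (χ ^ 2) ψ ^ 3) := by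
  have hq1 : 1 ≤ Fintype.card F := Fintype.card_pos
  have hqc : (Fintype.card F : ℂ) ≠ 0 := Nat.cast_ne_zero.mpr (by omega)
  have hprim : ψ.IsPrimitive :=
    AddChar.IsPrimitive.of_ne_one (by rintro rfl; obtain ⟨a, ha⟩ := hψ; exact ha (AddChar.one_apply a))
  have hχ3 : χ ^ 3 = 1 := hχ ▸ pow_orderOf_eq_one χ
  have hχne : χ ≠ 1 := by
    intro h
    rw [h, orderOf_one] at hχ
    omega
  have hχ2ne : χ ^ 2 ≠ 1 := by
    intro h
    have := orderOf_dvd_of_pow_eq_one h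
    rw [hχ] at this
    omega
  have hval : ∀ v : F, v ≠ 0 → χ v ^ 3 = 1 := by
    intro v hv
    rw [← MulChar.pow_apply' χ (n := 3) (by norm_num) v, hχ3]
    have := MulChar.one_apply_coe (R := F) (R' := ℂ) (isUnit_iff_ne_zero.mpr hv).unit
    rwa [IsUnit.unit_spec] at this
  set q : ℂ := (Fintype.card F : ℂ) with hqdef
  set G : ℂ := gaussSum χ ψ with hGdef
  set H : ℂ := gaussSum (χ ^ 2) ψ with hHdef
  set M : ℂ := (Fintype.card {x : F × F × F //
      a₁ * x.1 ^ 3 + a₂ * x.2.1 ^ 3 + a₃ * x.2.2 ^ 3 = 0} : ℂ) with hMdef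
  set C₀ : ℂ := (χ a₁ * χ a₂ * χ a₃) ^ 2 * G ^ 3 + (χ a₁ * χ a₂ * χ a₃) * H ^ 3 with hC₀
  set C₁ : ℂ := G * H ^ 2 * (χ a₁ * χ a₂ * χ a₃) * (χ a₁ + χ a₂ + χ a₃) with hC₁
  set C₂ : ℂ := G ^ 2 * H * (χ a₁ * χ a₂ * χ a₃) *
      (χ a₁ * χ a₂ + χ a₁ * χ a₃ + χ a₂ * χ a₃) with hC₂
  -- Step A : orthogonality
  have hA : ∑ t : F, ∑ x : F × F × F,
      ψ (t * (a₁ * x.1 ^ 3 + a₂ * x.2.1 ^ 3 + a₃ * x.2.2 ^ 3)) = q * M := by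
    rw [Finset.sum_comm]
    have hx : ∀ x : F × F × F,
        ∑ t : F, ψ (t * (a₁ * x.1 ^ 3 + a₂ * x.2.1 ^ 3 + a₃ * x.2.2 ^ 3)) =
          if a₁ * x.1 ^ 3 + a₂ * x.2.1 ^ 3 + a₃ * x.2.2 ^ 3 = 0 then q else 0 := by
      intro x
      rw [AddChar.sum_mulShift _ hprim]
      split_ifs <;> simp [hqdef]
    rw [Finset.sum_congr rfl fun x _ => hx x, Finset.sum_ite, Finset.sum_const,
      Finset.sum_const_zero, add_zero, nsmul_eq_mul, hMdef, Fintype.card_subtype]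
    push_cast
    ring
  -- Step B : factor the inner sum
  have hB : ∀ t : F, ∑ x : F × F × F,
      ψ (t * (a₁ * x.1 ^ 3 + a₂ * x.2.1 ^ 3 + a₃ * x.2.2 ^ 3)) =
        (∑ x : F, ψ ((t * a₁) * x ^ 3)) * (∑ x : F, ψ ((t * a₂) * x ^ 3)) *
          (∑ x : F, ψ ((t * a₃) * x ^ 3)) := by
    intro t
    have e23 : (∑ x : F, ψ ((t * a₂) * x ^ 3)) * (∑ x : F, ψ ((t * a₃) * x ^ 3)) =
        ∑ x₂ : F, ∑ x₃ : F, ψ ((t * a₂) * x₂ ^ 3) * ψ ((t * a₃) * x₃ ^ 3) :=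
      Finset.sum_mul_sum _ _ _ _
    have e123 : (∑ x : F, ψ ((t * a₁) * x ^ 3)) *
        ((∑ x : F, ψ ((t * a₂) * x ^ 3)) * (∑ x : F, ψ ((t * a₃) * x ^ 3))) =
        ∑ x₁ : F, ∑ x₂ : F, ∑ x₃ : F,
          ψ ((t * a₁) * x₁ ^ 3) * (ψ ((t * a₂) * x₂ ^ 3) * ψ ((t * a₃) * x₃ ^ 3)) := by
      rw [e23, Finset.sum_mul_sum]
      exact Finset.sum_congr rfl fun x₁ _ => Finset.sum_congr rfl fun x₂ _ =>
        Finset.mul_sum _ _ _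
    rw [mul_assoc, e123]
    rw [Fintype.sum_prod_type]
    refine Finset.sum_congr rfl fun x₁ _ => ?_
    rw [Fintype.sum_prod_type]
    refine Finset.sum_congr rfl fun x₂ _ => Finset.sum_congr rfl fun x₃ _ => ?_
    rw [show t * (a₁ * x₁ ^ 3 + a₂ * x₂ ^ 3 + a₃ * x₃ ^ 3) =
      (t * a₁) * x₁ ^ 3 + ((t * a₂) * x₂ ^ 3 + (t * a₃) * x₃ ^ 3) from by ring,
      AddChar.map_add_eq_mul, AddChar.map_add_eq_mul]
  -- value at t = 0
  have hg0 : (∑ x : F, ψ (((0 : F) * a₁) * x ^ 3)) * (∑ x : F, ψ (((0 : F) * a₂) * x ^ 3)) *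
      (∑ x : F, ψ (((0 : F) * a₃) * x ^ 3)) = q ^ 3 := by
    simp only [zero_mul, AddChar.map_zero_eq_one, Finset.sum_const, Finset.card_univ,
      nsmul_eq_mul, mul_one]
    ring
  -- value at t ≠ 0
  have hterm : ∀ t ∈ univ.erase (0 : F),
      (∑ x : F, ψ ((t * a₁) * x ^ 3)) * (∑ x : F, ψ ((t * a₂) * x ^ 3)) *
        (∑ x : F, ψ ((t * a₃) * x ^ 3)) = C₀ + C₁ * χ t + C₂ * (χ t) ^ 2 := by
    intro t ht
    have ht' : t ≠ 0 := (Finset.mem_erase.mp ht).1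
    rw [S_eq hq ψ hψ χ hχ (mul_ne_zero ht' ha₁), S_eq hq ψ hψ χ hχ (mul_ne_zero ht' ha₂),
      S_eq hq ψ hψ χ hχ (mul_ne_zero ht' ha₃)]
    simp only [MulChar.pow_apply' χ (n := 2) (by norm_num), map_mul, ← hGdef, ← hHdef]
    have hz : χ t ^ 3 = 1 := hval t ht'
    rw [hC₀, hC₁, hC₂]
    linear_combination ((χ a₁ * χ a₂ * χ a₃) ^ 2 * G ^ 3 * ((χ t) ^ 3 + 1) +
      (G ^ 2 * H * (χ a₁ * χ a₂ * χ a₃) *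
        (χ a₁ * χ a₂ + χ a₁ * χ a₃ + χ a₂ * χ a₃)) * (χ t) ^ 2 +
      (G * H ^ 2 * (χ a₁ * χ a₂ * χ a₃) * (χ a₁ + χ a₂ + χ a₃)) * (χ t) +
      (χ a₁ * χ a₂ * χ a₃) * H ^ 3) * hz
  -- character sums over nonzero elements vanish
  have hsum1 : ∑ t ∈ univ.erase (0 : F), χ t = 0 := by
    rw [Finset.sum_erase_eq_sub (Finset.mem_univ (0 : F)),
      MulChar.sum_eq_zero_of_ne_one hχne, χ.map_zero, sub_zero]
  have hsum2 : ∑ t ∈ univ.erase (0 : F), (χ t) ^ 2 = 0 := by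
    have hpt : ∀ t : F, (χ t) ^ 2 = (χ ^ 2) t := fun t =>
      (MulChar.pow_apply' χ (n := 2) (by norm_num) t).symm
    rw [Finset.sum_congr rfl fun t _ => hpt t,
      Finset.sum_erase_eq_sub (Finset.mem_univ (0 : F)),
      MulChar.sum_eq_zero_of_ne_one hχ2ne, MulChar.map_zero, sub_zero]
  have hcarde : (((univ.erase (0 : F)).card : ℂ)) = q - 1 := by
    rw [Finset.card_erase_of_mem (Finset.mem_univ 0), Finset.card_univ, Nat.cast_sub hq1,
      Nat.cast_one]
  have hE : ∑ t ∈ univ.erase (0 : F),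
      (∑ x : F, ψ ((t * a₁) * x ^ 3)) * (∑ x : F, ψ ((t * a₂) * x ^ 3)) *
        (∑ x : F, ψ ((t * a₃) * x ^ 3)) = (q - 1) * C₀ := by
    rw [Finset.sum_congr rfl hterm, Finset.sum_add_distrib, Finset.sum_add_distrib,
      Finset.sum_const, ← Finset.mul_sum, ← Finset.mul_sum, hsum1, hsum2, mul_zero, mul_zero,
      add_zero, add_zero, nsmul_eq_mul, hcarde]
  -- assemble
  have hfinal : q * M = q ^ 3 + (q - 1) * C₀ := by
    calc q * M = ∑ t : F, ∑ x : F × F × F,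
        ψ (t * (a₁ * x.1 ^ 3 + a₂ * x.2.1 ^ 3 + a₃ * x.2.2 ^ 3)) := hA.symm
      _ = ∑ t : F, ((∑ x : F, ψ ((t * a₁) * x ^ 3)) * (∑ x : F, ψ ((t * a₂) * x ^ 3)) *
            (∑ x : F, ψ ((t * a₃) * x ^ 3))) := Finset.sum_congr rfl fun t _ => hB t
      _ = (∑ x : F, ψ (((0 : F) * a₁) * x ^ 3)) * (∑ x : F, ψ (((0 : F) * a₂) * x ^ 3)) *
            (∑ x : F, ψ (((0 : F) * a₃) * x ^ 3)) +
          ∑ t ∈ univ.erase (0 : F),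
            ((∑ x : F, ψ ((t * a₁) * x ^ 3)) * (∑ x : F, ψ ((t * a₂) * x ^ 3)) *
              (∑ x : F, ψ ((t * a₃) * x ^ 3))) :=
        (Finset.add_sum_erase univ _ (Finset.mem_univ 0)).symm
      _ = q ^ 3 + (q - 1) * C₀ := by rw [hg0, hE]
  have hCa : (χ ^ 2) (a₁ * a₂ * a₃) = (χ a₁ * χ a₂ * χ a₃) ^ 2 := by
    rw [MulChar.pow_apply' χ (n := 2) (by norm_num), map_mul, map_mul]
  have hCa' : χ (a₁ * a₂ * a₃) = χ a₁ * χ a₂ * χ a₃ := by rw [map_mul, map_mul]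
  rw [hCa, hCa', ← hC₀]
  field_simp
  linear_combination hfinal
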